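/- Given the field equation for connected tree products, Tᶜ_tree(e_⊗^{iS/ħ} ⊗ δ(S₀+S)/δφ(x)) = δS₀/δφ(x), and the factorization Tᶜ_tree(e_⊗^{iS/ħ} ⊗ FG) = Tᶜ_tree(e_⊗^{iS/ħ}⊗F)·Tᶜ_tree(e_⊗^{iS/ħ}⊗G), the Master Ward Identity for tree diagrams holds: Tᶜ_tree(e_⊗^{iS/ħ} ⊗ (A + δ_A S)) = ∫ dx Tᶜ_tree(e_⊗^{iS/ħ} ⊗ Q(x)) · δS₀/δφ(x), where A = ∫ dx Q(x) δS₀/δφ(x) and δ_A S = ∫ dx Q(x) δS/δφ(x). -/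

import Mathlib

theorem tree_level_MWI
    {A : Type*} [CommRing A] [Algebra ℂ A]
    {X : Type*} [Fintype X]
    (T : A →ₗ[ℂ] PowerSeries A)
    (Q dS0 dS : X → A)
    (hfield : ∀ x : X, T (dS0 x + dS x) = PowerSeries.C (R := A) (dS0 x))
    (hfact : ∀ F G : A, T (F * G) = T F * T G) :
    T ((∑ x : X, Q x * dS0 x) + (∑ x : X, Q x * dS x))
      = ∑ x : X, T (Q x) * PowerSeries.C (R := A) (dS0 x) := by
  rw [← Finset.sum_add_distrib]
  simp_rw [← mul_add]
  rw [map_sum]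
  exact Finset.sum_congr rfl fun x _ => by rw [hfact, hfield]
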